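/- Let a, b, c, d, p, q, r, s, w be integers satisfying a·p + b·q = 1 + a·b and c·r + d·s = 1 + c·d, and set u = a·c + b·d and v = a·d − b·c. If v·w ≡ 1 (mod u), then (a² + b²)·(c·(a − q) + d·p)·w ≡ 1 (mod u); that is, (c·(a − q) + d·p)·w represents the modular inverse of a² + b² modulo u. -/
import Mathlib

theorem inverse_of_sum_of_squares_ab_mod_u
    (a b c d p q r s w : ℤ)
    (hab : a * p + b * q = 1 + a * b)
    (hcd : c * r + d * s = 1 + c * d)
    (hw : (a * d - b * c) * w ≡ 1 [ZMOD a * c + b * d]) :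
    (a ^ 2 + b ^ 2) * ((c * (a - q) + d * p) * w) ≡ 1 [ZMOD a * c + b * d] := by
  have hdvd : (a * c + b * d) ∣ ((a * d - b * c) - (a ^ 2 + b ^ 2) * (c * (a - q) + d * p)) :=
    ⟨-(a ^ 2 - a * q + b * p), by linear_combination (b * c - a * d) * hab⟩
  have h2 : (a ^ 2 + b ^ 2) * (c * (a - q) + d * p) ≡ a * d - b * c [ZMOD a * c + b * d] :=
    Int.modEq_iff_dvd.mpr hdvd
  rw [← mul_assoc]
  exact (h2.mul_right w).trans hw
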